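/- Let (X, d) be a metric space, f : X → ℝ Lipschitz with constant L, x₁, …, xₙ, x⋆ ∈ X, and let ε₁, …, εₙ be independent real-valued random variables with E[εᵢ] = 0 and |εᵢ| ≤ b almost surely (b > 0). Set yᵢ = f(xᵢ) + εᵢ and let w₁, …, wₙ be nonnegative reals with Σᵢ wᵢ = 1. Then for every δ ∈ (0, 1), with probability at least 1 − δ, |Σᵢ wᵢ yᵢ − f(x⋆)| ≤ b·√(2·log(2/δ))·(Σᵢ wᵢ²)^{1/2} + L · Σᵢ wᵢ d(xᵢ, x⋆). -/

import Mathlib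

open MeasureTheory ProbabilityTheory

lemma my_integrable_of_ae_abs_le {Ω : Type*} [MeasureSpace Ω]
    [IsFiniteMeasure (ℙ : Measure Ω)]
    {Z : Ω → ℝ} (hZ : Measurable Z) {c : ℝ} (h : ∀ᵐ ω ∂ℙ, |Z ω| ≤ c) :
    Integrable Z ℙ :=
  (integrable_const c).mono' hZ.aestronglyMeasurable (h.mono fun ω hω => by simpa using hω)

lemma my_integrable_exp_of_bounded {Ω : Type*} [MeasureSpace Ω]
    [IsFiniteMeasure (ℙ : Measure Ω)]
    {Z : Ω → ℝ} (hZ : Measurable Z) {c : ℝ} (hbdd : ∀ᵐ ω ∂ℙ, |Z ω| ≤ c) (t : ℝ) :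
    Integrable (fun ω => Real.exp (t * Z ω)) ℙ := by
  refine my_integrable_of_ae_abs_le (hZ.const_mul t).exp
    (c := Real.exp (|t| * c)) (hbdd.mono fun ω hω => ?_)
  rw [abs_of_nonneg (Real.exp_nonneg _)]
  refine Real.exp_le_exp.mpr ?_
  calc t * Z ω ≤ |t * Z ω| := le_abs_self _
    _ = |t| * |Z ω| := abs_mul _ _
    _ ≤ |t| * c := by
        exact mul_le_mul_of_nonneg_left hω (abs_nonneg t)

/-- Hoeffding-type bound on the mgf of a mean-zero random variable bounded by `c`. -/
lemma my_mgf_le_of_bounded {Ω : Type*} [MeasureSpace Ω]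
    [IsProbabilityMeasure (ℙ : Measure Ω)]
    {Z : Ω → ℝ} (hZ : Measurable Z) {c : ℝ} (hc : 0 ≤ c)
    (hbdd : ∀ᵐ ω ∂ℙ, |Z ω| ≤ c) (hmean : ∫ ω, Z ω ∂ℙ = 0) (t : ℝ) :
    mgf Z ℙ t ≤ Real.exp (t ^ 2 * c ^ 2 / 2) := by
  rcases eq_or_lt_of_le hc with hc0 | hc
  · have h0 : ∀ᵐ ω ∂ℙ, Real.exp (t * Z ω) = 1 := hbdd.mono fun ω hω => by
      have hz : Z ω = 0 := by
        have : |Z ω| ≤ 0 := by rw [hc0]; exact hω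
        simpa using abs_nonpos_iff.mp this
      simp [hz]
    have : mgf Z ℙ t = 1 := by
      rw [mgf, integral_congr_ae h0]
      simp
    rw [this]
    exact Real.one_le_exp (by positivity)
  · have key : ∀ᵐ ω ∂ℙ, Real.exp (t * Z ω) ≤
        Real.cosh (t * c) + (Z ω / c) * Real.sinh (t * c) := by
      filter_upwards [hbdd] with ω hω
      have h1 : -c ≤ Z ω := (abs_le.mp hω).1
      have h2 : Z ω ≤ c := (abs_le.mp hω).2
      have hla : 0 ≤ (c - Z ω) / (2 * c) := div_nonneg (by linarith) (by positivity)
      have hmu : 0 ≤ (c + Z ω) / (2 * c) := div_nonneg (by linarith) (by positivity)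
      have hsum : (c - Z ω) / (2 * c) + (c + Z ω) / (2 * c) = 1 := by
        field_simp
        ring
      have hcvx := convexOn_exp.2 (Set.mem_univ (t * (-c))) (Set.mem_univ (t * c)) hla hmu hsum
      simp only [smul_eq_mul] at hcvx
      have harg : (c - Z ω) / (2 * c) * (t * (-c)) + (c + Z ω) / (2 * c) * (t * c)
          = t * Z ω := by
        field_simp
        ring
      rw [harg] at hcvx
      refine hcvx.trans_eq ?_
      rw [Real.cosh_eq, Real.sinh_eq]
      field_simp
      ring
    have hZint : Integrable Z ℙ := my_integrable_of_ae_abs_le hZ hbdd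
    have hint1 : Integrable (fun ω => Real.exp (t * Z ω)) ℙ :=
      my_integrable_exp_of_bounded hZ hbdd t
    have hint2 : Integrable
        (fun ω => Real.cosh (t * c) + (Z ω / c) * Real.sinh (t * c)) ℙ :=
      (integrable_const _).add ((hZint.div_const c).mul_const _)
    calc mgf Z ℙ t = ∫ ω, Real.exp (t * Z ω) ∂ℙ := rfl
      _ ≤ ∫ ω, (Real.cosh (t * c) + (Z ω / c) * Real.sinh (t * c)) ∂ℙ :=
          integral_mono_ae hint1 hint2 key
      _ = Real.cosh (t * c) := by
          rw [integral_add (integrable_const _) ((hZint.div_const c).mul_const _),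
            integral_const, integral_mul_const, integral_div, hmean]
          simp
      _ ≤ Real.exp ((t * c) ^ 2 / 2) := Real.cosh_le_exp_half_sq _
      _ = Real.exp (t ^ 2 * c ^ 2 / 2) := by rw [mul_pow]

/-- Proposition 1 of the paper (Anava–Levy bias–variance bound for weighted
nearest-neighbor regression): with probability at least `1 - δ`,
`|∑ i, w i * y i - f x⋆| ≤ b √(2 log(2/δ)) ‖w‖₂ + L ∑ i, w i d(x i, x⋆)`. -/
theorem stmt_2 {X : Type*} [MetricSpace X]
    {Ω : Type*} [MeasureSpace Ω] [IsProbabilityMeasure (ℙ : Measure Ω)]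
    {n : ℕ} (f : X → ℝ) (L : ℝ)
    (hf : ∀ x x' : X, |f x - f x'| ≤ L * dist x x')
    (x : Fin n → X) (xs : X)
    (ε : Fin n → Ω → ℝ) (hmeas : ∀ i, Measurable (ε i))
    (hindep : iIndepFun ε ℙ)
    (b : ℝ) (hb : 0 < b)
    (hmean : ∀ i, ∫ ω, ε i ω ∂ℙ = 0)
    (hbdd : ∀ i, ∀ᵐ ω ∂ℙ, |ε i ω| ≤ b)
    (y : Fin n → Ω → ℝ) (hy : ∀ i ω, y i ω = f (x i) + ε i ω)
    (w : Fin n → ℝ) (hw : ∀ i, 0 ≤ w i) (hw1 : ∑ i, w i = 1)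
    (δ : ℝ) (hδ : δ ∈ Set.Ioo (0 : ℝ) 1) :
    ENNReal.ofReal (1 - δ) ≤
      ℙ {ω | |(∑ i, w i * y i ω) - f xs| ≤
        b * Real.sqrt (2 * Real.log (2 / δ)) * Real.sqrt (∑ i, (w i) ^ 2)
          + L * ∑ i, w i * dist (x i) xs} := by
  obtain ⟨hδ0, hδ1⟩ := hδ
  have hlog : 0 < Real.log (2 / δ) := Real.log_pos (by
    rw [lt_div_iff₀ hδ0]; linarith)
  set W : ℝ := ∑ i, (w i) ^ 2 with hWdef
  have hWnn : 0 ≤ W := Finset.sum_nonneg fun i _ => sq_nonneg _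
  have hWpos : 0 < W := by
    have hex : ∃ i, w i ≠ 0 := by
      by_contra h
      push_neg at h
      simp [h] at hw1
    obtain ⟨i, hi⟩ := hex
    have h1 : 0 < w i ^ 2 := by positivity
    exact h1.trans_le (Finset.single_le_sum (fun j _ => sq_nonneg (w j)) (Finset.mem_univ i))
  set T : ℝ := b * Real.sqrt (2 * Real.log (2 / δ)) * Real.sqrt W with hTdef
  set V : ℝ := b ^ 2 * W with hVdef
  have hVpos : 0 < V := by positivity
  have hTpos : 0 < T := by
    have h1 : 0 < Real.sqrt (2 * Real.log (2 / δ)) := Real.sqrt_pos.mpr (by linarith)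
    have h2 : 0 < Real.sqrt W := Real.sqrt_pos.mpr hWpos
    positivity
  have hT2 : T ^ 2 = 2 * Real.log (2 / δ) * V := by
    rw [hTdef, hVdef, mul_pow, mul_pow, Real.sq_sqrt (by linarith), Real.sq_sqrt hWnn]
    ring
  set S : Ω → ℝ := fun ω => ∑ i, w i * ε i ω with hSdef
  set Z : Fin n → Ω → ℝ := fun i ω => w i * ε i ω with hZdef
  have hZmeas : ∀ i, Measurable (Z i) := fun i => (hmeas i).const_mul (w i)
  have hSmeas : Measurable S := Finset.measurable_sum _ fun i _ => hZmeas i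
  have hSsum : S = ∑ i, Z i := by
    ext ω
    simp [hSdef, hZdef]
  have hZindep : iIndepFun Z ℙ :=
    hindep.comp (fun i z => w i * z) fun i => measurable_const_mul _
  have hZbdd : ∀ i, ∀ᵐ ω ∂ℙ, |Z i ω| ≤ w i * b := fun i =>
    (hbdd i).mono fun ω hω => by
      rw [hZdef]
      simp only
      rw [abs_mul, abs_of_nonneg (hw i)]
      exact mul_le_mul_of_nonneg_left hω (hw i)
  have hZmean : ∀ i, ∫ ω, Z i ω ∂ℙ = 0 := fun i => by
    simp only [hZdef]
    rw [integral_const_mul, hmean i, mul_zero]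
  -- mgf bound for the sum
  have hmgf : ∀ t : ℝ, mgf S ℙ t ≤ Real.exp (t ^ 2 * V / 2) := by
    intro t
    rw [hSsum, iIndepFun.mgf_sum hZindep hZmeas]
    calc ∏ i, mgf (Z i) ℙ t ≤ ∏ i, Real.exp (t ^ 2 * (w i * b) ^ 2 / 2) := by
          refine Finset.prod_le_prod (fun i _ => mgf_nonneg) fun i _ => ?_
          exact my_mgf_le_of_bounded (hZmeas i) (mul_nonneg (hw i) hb.le) (hZbdd i) (hZmean i) t
      _ = Real.exp (∑ i, t ^ 2 * (w i * b) ^ 2 / 2) := by rw [Real.exp_sum]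
      _ = Real.exp (t ^ 2 * V / 2) := by
          congr 1
          rw [hVdef, hWdef, Finset.mul_sum, ← Finset.sum_div, Finset.mul_sum]
          congr 1
          refine Finset.sum_congr rfl fun i _ => ?_
          ring
  have hSbdd : ∀ᵐ ω ∂ℙ, |S ω| ≤ b := by
    filter_upwards [ae_all_iff.mpr hbdd] with ω hω
    calc |S ω| ≤ ∑ i, |w i * ε i ω| := Finset.abs_sum_le_sum_abs _ _
      _ ≤ ∑ i, w i * b := Finset.sum_le_sum fun i _ => by
          rw [abs_mul, abs_of_nonneg (hw i)]
          exact mul_le_mul_of_nonneg_left (hω i) (hw i)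
      _ = b := by rw [← Finset.sum_mul, hw1, one_mul]
  set t₀ : ℝ := T / V with ht₀def
  have ht₀pos : 0 < t₀ := div_pos hTpos hVpos
  have hexp : Real.exp (-t₀ * T + t₀ ^ 2 * V / 2) = δ / 2 := by
    have harg : -t₀ * T + t₀ ^ 2 * V / 2 = -Real.log (2 / δ) := by
      have h1 : -t₀ * T + t₀ ^ 2 * V / 2 = -(T ^ 2) / (2 * V) := by
        rw [ht₀def]
        field_simp
        ring
      rw [h1, hT2]
      field_simp
    rw [harg, Real.exp_neg, Real.exp_log (by positivity), inv_div]
  -- upper tail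
  have hup : (ℙ {ω | T ≤ S ω}).toReal ≤ δ / 2 := by
    have h1 := measure_ge_le_exp_mul_mgf (X := S) (μ := ℙ) T ht₀pos.le
      (my_integrable_exp_of_bounded hSmeas hSbdd t₀)
    calc (ℙ {ω | T ≤ S ω}).toReal ≤ Real.exp (-t₀ * T) * mgf S ℙ t₀ := h1
      _ ≤ Real.exp (-t₀ * T) * Real.exp (t₀ ^ 2 * V / 2) :=
          mul_le_mul_of_nonneg_left (hmgf t₀) (Real.exp_nonneg _)
      _ = Real.exp (-t₀ * T + t₀ ^ 2 * V / 2) := (Real.exp_add _ _).symm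
      _ = δ / 2 := hexp
  -- lower tail
  have hlo : (ℙ {ω | S ω ≤ -T}).toReal ≤ δ / 2 := by
    have h1 := measure_le_le_exp_mul_mgf (X := S) (μ := ℙ) (-T) (neg_nonpos.mpr ht₀pos.le)
      (my_integrable_exp_of_bounded hSmeas hSbdd (-t₀))
    calc (ℙ {ω | S ω ≤ -T}).toReal ≤ Real.exp (-(-t₀) * (-T)) * mgf S ℙ (-t₀) := h1
      _ ≤ Real.exp (-(-t₀) * (-T)) * Real.exp ((-t₀) ^ 2 * V / 2) :=
          mul_le_mul_of_nonneg_left (hmgf (-t₀)) (Real.exp_nonneg _)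
      _ = Real.exp (-t₀ * T + t₀ ^ 2 * V / 2) := by
          rw [← Real.exp_add]
          ring_nf
      _ = δ / 2 := hexp
  set A : Set Ω := {ω | |S ω| ≤ T} with hAdef
  have hAmeas : MeasurableSet A := measurableSet_le hSmeas.abs measurable_const
  have hcompl : Aᶜ ⊆ {ω | T ≤ S ω} ∪ {ω | S ω ≤ -T} := by
    intro ω hω
    simp only [hAdef, Set.mem_compl_iff, Set.mem_setOf_eq, not_le] at hω
    rcases le_total 0 (S ω) with hs | hs
    · left
      rw [abs_of_nonneg hs] at hω
      exact hω.le
    · right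
      rw [abs_of_nonpos hs] at hω
      simp only [Set.mem_setOf_eq]
      linarith
  have hAc : ℙ Aᶜ ≤ ENNReal.ofReal δ := by
    calc ℙ Aᶜ ≤ ℙ {ω | T ≤ S ω} + ℙ {ω | S ω ≤ -T} :=
        (measure_mono hcompl).trans (measure_union_le _ _)
      _ ≤ ENNReal.ofReal (δ / 2) + ENNReal.ofReal (δ / 2) := by
          gcongr
          · exact (ENNReal.le_ofReal_iff_toReal_le (measure_ne_top _ _) (by positivity)).mpr hup
          · exact (ENNReal.le_ofReal_iff_toReal_le (measure_ne_top _ _) (by positivity)).mpr hlo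
      _ = ENNReal.ofReal δ := by
          rw [← ENNReal.ofReal_add (by positivity) (by positivity)]
          norm_num
  have hA : ENNReal.ofReal (1 - δ) ≤ ℙ A := by
    have h1 : (1 : ENNReal) ≤ ℙ A + ENNReal.ofReal δ := by
      calc (1 : ENNReal) = ℙ A + ℙ Aᶜ := ((measure_add_measure_compl hAmeas).trans
            (measure_univ)).symm
        _ ≤ ℙ A + ENNReal.ofReal δ := add_le_add le_rfl hAc
    calc ENNReal.ofReal (1 - δ) = 1 - ENNReal.ofReal δ := by
          rw [ENNReal.ofReal_sub _ hδ0.le, ENNReal.ofReal_one]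
      _ ≤ ℙ A := tsub_le_iff_right.mpr h1
  refine hA.trans (measure_mono ?_)
  intro ω hω
  simp only [hAdef, Set.mem_setOf_eq] at hω ⊢
  have hrw : (∑ i, w i * y i ω) - f xs = S ω + ∑ i, w i * (f (x i) - f xs) := by
    have h1 : ∑ i, w i * y i ω = (∑ i, w i * f (x i)) + S ω := by
      simp only [hy, mul_add, Finset.sum_add_distrib, hSdef]
    have h2 : ∑ i, w i * (f (x i) - f xs) = (∑ i, w i * f (x i)) - f xs := by
      simp only [mul_sub, Finset.sum_sub_distrib, ← Finset.sum_mul, hw1, one_mul]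
    rw [h1, h2]
    ring
  calc |(∑ i, w i * y i ω) - f xs| = |S ω + ∑ i, w i * (f (x i) - f xs)| := by rw [hrw]
    _ ≤ |S ω| + |∑ i, w i * (f (x i) - f xs)| := abs_add_le _ _
    _ ≤ T + L * ∑ i, w i * dist (x i) xs := by
        refine add_le_add hω ?_
        calc |∑ i, w i * (f (x i) - f xs)| ≤ ∑ i, |w i * (f (x i) - f xs)| :=
            Finset.abs_sum_le_sum_abs _ _
          _ ≤ ∑ i, w i * (L * dist (x i) xs) := Finset.sum_le_sum fun i _ => by
              rw [abs_mul, abs_of_nonneg (hw i)]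
              exact mul_le_mul_of_nonneg_left (hf (x i) xs) (hw i)
          _ = L * ∑ i, w i * dist (x i) xs := by
              rw [Finset.mul_sum]
              exact Finset.sum_congr rfl fun i _ => by ring
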